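/- There exists d₀ > 0 such that the following holds for every real β > 1/2 and every 0 < d < d₀: let ℓ = ⌊2β·log₂(1/d)⌋; if p is a probability mass function on the positive integers with finite mean μ and Shannon entropy H(p) ≥ (1 − d^β)·μ, then ∑_{l≥ℓ} l·p(l) ≤ 20·d^β. -/

import Mathlib

private lemma log74 : Real.log (7/4) ≤ 0.81 * Real.log 2 := by
  have h1 : Real.log ((7/4:ℝ)^(5:ℕ)) = 5 * Real.log (7/4) := by
    rw [Real.log_pow]; norm_num
  have h2 : ((7/4:ℝ)^(5:ℕ)) = (2:ℝ)^(4:ℕ) * (16807/16384) := by norm_num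
  have h3 : Real.log ((7/4:ℝ)^(5:ℕ)) = 4 * Real.log 2 + Real.log (16807/16384) := by
    rw [h2, Real.log_mul (by norm_num) (by norm_num), Real.log_pow]; norm_num
  have h5 : Real.log (16807/16384:ℝ) ≤ 423/16384 := by
    have := Real.log_le_sub_one_of_pos (x := (16807/16384:ℝ)) (by norm_num)
    linarith
  have hl2 := Real.log_two_gt_d9
  linarith

private lemma log43 : Real.log (4/3) ≤ 0.42 * Real.log 2 := by
  have h1 : Real.log ((4/3:ℝ)^(5:ℕ)) = 5 * Real.log (4/3) := by
    rw [Real.log_pow]; norm_num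
  have h2 : ((4/3:ℝ)^(5:ℕ)) = (2:ℝ)^(2:ℕ) * (256/243) := by norm_num
  have h3 : Real.log ((4/3:ℝ)^(5:ℕ)) = 2 * Real.log 2 + Real.log (256/243) := by
    rw [h2, Real.log_mul (by norm_num) (by norm_num), Real.log_pow]; norm_num
  have h5 : Real.log (256/243:ℝ) ≤ 13/243 := by
    have := Real.log_le_sub_one_of_pos (x := (256/243:ℝ)) (by norm_num)
    linarith
  have hl2 := Real.log_two_gt_d9
  linarith

private lemma entropy_term_le {x q : ℝ} (hx : 0 ≤ x) (hq : 0 < q) :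
    -(x * Real.logb 2 x) ≤ x * Real.logb 2 (1/q) + (q - x) / Real.log 2 := by
  have hl2 : (0:ℝ) < Real.log 2 := Real.log_pos one_lt_two
  have key : -(x * Real.log x) ≤ x * Real.log (1/q) + (q - x) := by
    rcases hx.eq_or_lt with h | h
    · rw [← h]; simp; linarith
    · have h1 : Real.log (q / x) ≤ q / x - 1 := Real.log_le_sub_one_of_pos (by positivity)
      have h2 : Real.log (q / x) = Real.log q - Real.log x := Real.log_div hq.ne' h.ne'
      have h3 : x * (q/x - 1) = q - x := by field_simp
      have h4 : Real.log (1/q) = - Real.log q := by rw [one_div, Real.log_inv]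
      nlinarith [mul_le_mul_of_nonneg_left h1 hx]
  have h2 := (div_le_div_iff_of_pos_right hl2).mpr key
  simp only [Real.logb]
  have e1 : -(x * (Real.log x / Real.log 2)) = -(x * Real.log x) / Real.log 2 := by ring
  have e2 : x * (Real.log (1/q) / Real.log 2) + (q - x) / Real.log 2
      = (x * Real.log (1/q) + (q - x)) / Real.log 2 := by ring
  linarith [e1, e2, h2]

private lemma summable_pnat_geom (r : ℝ) (h0 : 0 ≤ r) (h1 : r < 1) :
    Summable (fun l : ℕ+ => r ^ (l : ℕ)) :=
  (summable_geometric_of_lt_one h0 h1).comp_injective PNat.coe_injective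

private lemma tsum_pnat_geom (r : ℝ) (h0 : 0 ≤ r) (h1 : r < 1) :
    ∑' (l : ℕ+), r ^ (l : ℕ) = r * (1 - r)⁻¹ := by
  rw [← Equiv.tsum_eq Equiv.pnatEquivNat.symm (fun l : ℕ+ => r ^ (l:ℕ))]
  have he : ∀ n : ℕ, ((Equiv.pnatEquivNat.symm n : ℕ+) : ℕ) = n + 1 := by
    intro n; simp [Equiv.pnatEquivNat]
  calc ∑' (n:ℕ), r ^ ((Equiv.pnatEquivNat.symm n : ℕ+) : ℕ)
      = ∑' (n:ℕ), r * r^n := by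
        apply tsum_congr; intro n; rw [he n, pow_succ, mul_comm]
    _ = r * ∑' (n:ℕ), r^n := tsum_mul_left
    _ = r * (1-r)⁻¹ := by rw [tsum_geometric_of_lt_one h0 h1]

private lemma summable_pnat_tail (r : ℝ) (h0 : 0 ≤ r) (h1 : r < 1) (L : ℕ) :
    Summable (fun l : ℕ+ => (if L ≤ (l:ℕ) then r ^ (l:ℕ) else 0)) := by
  apply Summable.of_nonneg_of_le (fun l => by positivity) _ (summable_pnat_geom r h0 h1)
  intro l
  split
  · exact le_refl _
  · positivity

private lemma tsum_pnat_geom_tail (r : ℝ) (h0 : 0 ≤ r) (h1 : r < 1) (L : ℕ) (hL : 1 ≤ L) :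
    ∑' (l : ℕ+), (if L ≤ (l:ℕ) then r ^ (l:ℕ) else 0) = r ^ L * (1 - r)⁻¹ := by
  have hf : Function.Injective (fun n : ℕ => (⟨n + L, by omega⟩ : ℕ+)) := by
    intro a b hab
    have : a + L = b + L := congrArg (fun x : ℕ+ => (x:ℕ)) hab
    omega
  have hsupp : Function.support (fun l : ℕ+ => (if L ≤ (l:ℕ) then r ^ (l:ℕ) else 0))
      ⊆ Set.range (fun n : ℕ => (⟨n + L, by omega⟩ : ℕ+)) := by
    intro x hx
    by_cases h : L ≤ (x:ℕ)
    · exact ⟨(x:ℕ) - L, by apply Subtype.ext; show (x:ℕ) - L + L = (x:ℕ); omega⟩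
    · exact absurd (if_neg h) hx
  have key := Function.Injective.tsum_eq (f := fun l : ℕ+ => if L ≤ (l:ℕ) then r ^ (l:ℕ) else 0)
    hf hsupp
  refine key.symm.trans ?_
  calc ∑' (n:ℕ), (if L ≤ ((⟨n + L, by omega⟩ : ℕ+):ℕ) then r ^ ((⟨n + L, by omega⟩ : ℕ+):ℕ) else 0)
      = ∑' (n:ℕ), r^L * r^n := by
        apply tsum_congr; intro n
        rw [if_pos (by simp)]
        simp [pow_add, mul_comm]
    _ = r^L * ∑' (n:ℕ), r^n := tsum_mul_left
    _ = r^L * (1-r)⁻¹ := by rw [tsum_geometric_of_lt_one h0 h1]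

private lemma gibbs (p q g : ℕ+ → ℝ) (hp0 : ∀ l, 0 ≤ p l) (hp1 : ∀ l, p l ≤ 1)
    (hq0 : ∀ l, 0 < q l) (hg : ∀ l, p l * Real.logb 2 (1 / q l) ≤ p l * g l)
    (hqs : Summable q) (hq1 : (∑' l, q l) ≤ 1)
    (hps : Summable p) (hpsum : (∑' (l : ℕ+), p l) = 1)
    (hgs : Summable (fun l => p l * g l)) :
    (∑' (l : ℕ+), -(p l * Real.logb 2 (p l))) ≤ ∑' (l : ℕ+), p l * g l := by
  have hl2 : (0:ℝ) < Real.log 2 := Real.log_pos one_lt_two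
  have hFs : Summable (fun l : ℕ+ => p l * g l + (q l - p l) / Real.log 2) :=
    hgs.add ((hqs.sub hps).div_const _)
  have hle : ∀ l : ℕ+, -(p l * Real.logb 2 (p l)) ≤ p l * g l + (q l - p l) / Real.log 2 := by
    intro l
    calc -(p l * Real.logb 2 (p l))
        ≤ p l * Real.logb 2 (1 / q l) + (q l - p l)/Real.log 2 :=
          entropy_term_le (hp0 l) (hq0 l)
      _ ≤ p l * g l + (q l - p l)/Real.log 2 := add_le_add_left (hg l) _
  have hnn : ∀ l : ℕ+, 0 ≤ -(p l * Real.logb 2 (p l)) := by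
    intro l
    have h := Real.logb_nonpos one_lt_two (hp0 l) (hp1 l)
    nlinarith [hp0 l]
  have hLs : Summable (fun l : ℕ+ => -(p l * Real.logb 2 (p l))) :=
    Summable.of_nonneg_of_le hnn hle hFs
  calc (∑' (l:ℕ+), -(p l * Real.logb 2 (p l)))
      ≤ ∑' (l:ℕ+), (p l * g l + (q l - p l) / Real.log 2) := Summable.tsum_le_tsum hle hLs hFs
    _ = (∑' (l:ℕ+), p l * g l) + (∑' (l:ℕ+), (q l - p l)) / Real.log 2 := by
        rw [Summable.tsum_add hgs ((hqs.sub hps).div_const _), tsum_div_const]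
    _ = (∑' (l:ℕ+), p l * g l) + ((∑' (l:ℕ+), q l) - 1) / Real.log 2 := by
        rw [Summable.tsum_sub hqs hps, hpsum]
    _ ≤ ∑' (l:ℕ+), p l * g l := by
        have h1 : ((∑' (l:ℕ+), q l) - 1) / Real.log 2 ≤ 0 :=
          div_nonpos_of_nonpos_of_nonneg (by linarith) hl2.le
        linarith


set_option maxHeartbeats 2000000 in
/-- There exists `d₀ > 0` such that for every `β > 1/2` and `0 < d < d₀`, with
`ℓ = ⌊2β·log₂(1/d)⌋`: if a pmf `p` on the positive integers has finite mean `μ`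
and Shannon entropy (in bits) at least `(1 - d^β)·μ`, then
`∑_{l ≥ ℓ} l·p(l) ≤ 20·d^β`. -/
theorem stmt_3 :
    ∃ d₀ : ℝ, 0 < d₀ ∧
      ∀ β : ℝ, 1 / 2 < β →
        ∀ d : ℝ, 0 < d → d < d₀ →
          ∀ p : ℕ+ → ℝ, (∀ l, 0 ≤ p l) → (∑' l : ℕ+, p l = 1) →
            (Summable fun l : ℕ+ => (l : ℝ) * p l) →
            (1 - d ^ β) * (∑' l : ℕ+, (l : ℝ) * p l) ≤
                (∑' l : ℕ+, -(p l * Real.logb 2 (p l))) →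
              (∑' l : ℕ+,
                  if Nat.floor (2 * β * Real.logb 2 (1 / d)) ≤ (l : ℕ) then
                    (l : ℝ) * p l
                  else 0) ≤ 20 * d ^ β := by
  refine ⟨1/1000000, by norm_num, ?_⟩
  intro β hβ d hd0 hd1 p hp0 hpsum hμs hH
  have hl2 : (0:ℝ) < Real.log 2 := Real.log_pos one_lt_two
  have hl2' := Real.log_two_gt_d9
  set ε := d ^ β with hεdef
  have hεpos : 0 < ε := Real.rpow_pos_of_pos hd0 β
  -- ε is small
  have hεsmall : ε ≤ 1/1000 := by
    have h1 : ε ≤ d ^ ((1/2 : ℝ)) :=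
      Real.rpow_le_rpow_of_exponent_ge hd0 (by linarith) hβ.le
    have h2 : d ^ ((1/2:ℝ)) ≤ (1/1000000:ℝ) ^ ((1/2):ℝ) :=
      Real.rpow_le_rpow hd0.le hd1.le (by norm_num)
    have h3 : ((1/1000000:ℝ)) ^ ((1/2):ℝ) = 1/1000 := by
      rw [show (1/1000000:ℝ) = (1/1000)^(2:ℕ) by norm_num,
        ← Real.rpow_natCast (1/1000) 2, ← Real.rpow_mul (by norm_num)]
      norm_num
    linarith
  have hεhalf : ε ^ ((1/2):ℝ) ≤ 1/25 := by
    have h1 : ε ^ ((1/2):ℝ) ≤ (1/625:ℝ)^((1/2):ℝ) :=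
      Real.rpow_le_rpow hεpos.le (by linarith) (by norm_num)
    have h2 : ((1/625:ℝ)) ^ ((1/2):ℝ) = 1/25 := by
      rw [show (1/625:ℝ) = (1/25)^(2:ℕ) by norm_num,
        ← Real.rpow_natCast (1/25) 2, ← Real.rpow_mul (by norm_num)]
      norm_num
    linarith
  -- basic facts about p and μ
  set μ := ∑' (l:ℕ+), ((l:ℕ):ℝ) * p l with hμdef
  have hμ0 : 0 ≤ μ := tsum_nonneg (fun l => mul_nonneg (by positivity) (hp0 l))
  have hps : Summable p := by
    apply Summable.of_nonneg_of_le hp0 _ hμs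
    intro l
    exact le_mul_of_one_le_left (hp0 l) (by exact_mod_cast l.one_le)
  have hp1 : ∀ l, p l ≤ 1 := by
    intro l
    rw [← hpsum]
    exact Summable.le_tsum hps l (fun j _ => hp0 j)
  -- Step 1 : bound on μ via Gibbs with the geometric distribution (3/4)*(4/7)^l
  have hμ23 : μ ≤ 2.23 := by
    have hq0 : ∀ l : ℕ+, (0:ℝ) < (3/4) * (4/7)^(l:ℕ) := fun l => by positivity
    have hqs : Summable (fun l : ℕ+ => (3/4:ℝ) * (4/7)^(l:ℕ)) :=
      (summable_pnat_geom (4/7) (by norm_num) (by norm_num)).mul_left _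
    have hq1 : (∑' (l:ℕ+), (3/4:ℝ) * (4/7)^(l:ℕ)) ≤ 1 := by
      rw [tsum_mul_left, tsum_pnat_geom (4/7) (by norm_num) (by norm_num)]
      norm_num
    have hg : ∀ l : ℕ+, p l * Real.logb 2 (1/((3/4) * (4/7)^(l:ℕ)))
        ≤ p l * (0.42 + 0.81 * ((l:ℕ):ℝ)) := by
      intro l
      apply mul_le_mul_of_nonneg_left _ (hp0 l)
      have h1 : (1:ℝ)/((3/4) * (4/7)^(l:ℕ)) = (4/3) * (7/4)^(l:ℕ) := by
        rw [one_div, mul_inv, ← inv_pow]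
        norm_num
      rw [h1, Real.logb, Real.log_mul (by norm_num) (by positivity), Real.log_pow,
        div_le_iff₀ hl2]
      have hc : (0:ℝ) ≤ ((l:ℕ):ℝ) := by positivity
      nlinarith [mul_le_mul_of_nonneg_left log74 hc, log43]
    have hgs : Summable (fun l : ℕ+ => p l * (0.42 + 0.81 * ((l:ℕ):ℝ))) := by
      have heq : (fun l : ℕ+ => p l * (0.42 + 0.81 * ((l:ℕ):ℝ)))
          = fun l : ℕ+ => 0.42 * p l + 0.81 * (((l:ℕ):ℝ) * p l) := by
        funext l; ring
      rw [heq]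
      exact (hps.mul_left _).add (hμs.mul_left _)
    have hgibbs := gibbs p (fun l : ℕ+ => (3/4:ℝ) * (4/7)^(l:ℕ))
      (fun l : ℕ+ => 0.42 + 0.81 * ((l:ℕ):ℝ)) hp0 hp1 hq0 hg hqs hq1 hps hpsum hgs
    have htsum : (∑' (l:ℕ+), p l * (0.42 + 0.81 * ((l:ℕ):ℝ))) = 0.42 + 0.81 * μ := by
      have heq : (fun l : ℕ+ => p l * (0.42 + 0.81 * ((l:ℕ):ℝ)))
          = fun l : ℕ+ => 0.42 * p l + 0.81 * (((l:ℕ):ℝ) * p l) := by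
        funext l; ring
      rw [heq, Summable.tsum_add (hps.mul_left _) (hμs.mul_left _), tsum_mul_left, tsum_mul_left,
        hpsum, ← hμdef]
      norm_num
    rw [htsum] at hgibbs
    have hchain : (1 - ε) * μ ≤ 0.42 + 0.81 * μ := le_trans hH hgibbs
    nlinarith [mul_le_mul_of_nonneg_right hεsmall hμ0]
  -- the cutoff L
  set L := Nat.floor (2 * β * Real.logb 2 (1/d)) with hLdef
  have hlogd : 1 ≤ Real.logb 2 (1/d) := by
    have h2d : (2:ℝ) ≤ 1/d := by
      rw [le_div_iff₀ hd0]; linarith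
    have h := (Real.logb_le_logb one_lt_two (by norm_num) (by positivity)).mpr h2d
    rwa [Real.logb_self_eq_one one_lt_two] at h
  have hL1 : 1 ≤ L := by
    apply Nat.le_floor
    push_cast
    nlinarith
  have hLlb : 2 * β * Real.logb 2 (1/d) - 1 < (L:ℝ) := Nat.sub_one_lt_floor _
  -- θ₃ = 2^(-3/4)
  set θ₃ : ℝ := (2:ℝ) ^ ((-(3/4)) : ℝ) with hθ₃def
  have hθ₃pos : 0 < θ₃ := Real.rpow_pos_of_pos two_pos _
  have hθ₃4 : θ₃ ^ (4:ℕ) = 1/8 := by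
    rw [hθ₃def, ← Real.rpow_natCast ((2:ℝ) ^ ((-(3/4)):ℝ)) 4, ← Real.rpow_mul (by norm_num),
      show ((-(3/4)):ℝ) * ((4:ℕ):ℝ) = ((-3:ℤ):ℝ) by norm_num, Real.rpow_intCast]
    norm_num
  have hθ₃lt : θ₃ ≤ 0.595 := by
    by_contra hcon
    push_neg at hcon
    have h := pow_lt_pow_left₀ hcon (by norm_num : (0:ℝ) ≤ 0.595) (n := 4) (by norm_num)
    rw [hθ₃4] at h
    norm_num at h
  have hθ₃lt1 : θ₃ < 1 := by linarith
  have h234 : (2:ℝ) ^ ((3/4):ℝ) ≤ 1.7 := by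
    have h4 : ((2:ℝ) ^ ((3/4):ℝ)) ^ (4:ℕ) = 8 := by
      rw [← Real.rpow_natCast ((2:ℝ) ^ ((3/4)):ℝ) 4, ← Real.rpow_mul (by norm_num),
        show ((3/4):ℝ) * ((4:ℕ):ℝ) = ((3:ℕ):ℝ) by norm_num, Real.rpow_natCast]
      norm_num
    by_contra hcon
    push_neg at hcon
    have h := pow_lt_pow_left₀ hcon (by norm_num : (0:ℝ) ≤ 1.7) (n := 4) (by norm_num)
    rw [h4] at h
    norm_num at h
  -- bound on θ₃ ^ L
  have hθ₃L : θ₃ ^ L ≤ 1.7 * (ε * (1/25)) := by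
    have h1 : θ₃ ^ L = (2:ℝ) ^ ((-(3/4)) * (L:ℝ)) := by
      rw [hθ₃def, ← Real.rpow_natCast ((2:ℝ) ^ ((-(3/4)):ℝ)) L, ← Real.rpow_mul (by norm_num)]
    have h2 : (-(3/4)) * (L:ℝ) ≤ Real.logb 2 (1/d) * ((-(3/2)) * β) + 3/4 := by
      linarith [hLlb]
    have h3 : (2:ℝ) ^ ((-(3/4)) * (L:ℝ))
        ≤ (2:ℝ) ^ (Real.logb 2 (1/d) * ((-(3/2)) * β) + 3/4) :=
      Real.rpow_le_rpow_of_exponent_le one_le_two h2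
    have h4 : (2:ℝ) ^ (Real.logb 2 (1/d) * ((-(3/2)) * β) + 3/4)
        = ((1/d) ^ (((-(3/2)) * β) : ℝ)) * (2:ℝ) ^ ((3/4):ℝ) := by
      rw [Real.rpow_add two_pos]
      congr 1
      rw [Real.rpow_mul two_pos.le, Real.rpow_logb two_pos (by norm_num) (by positivity)]
    have h5 : ((1/d:ℝ)) ^ (((-(3/2)) * β) : ℝ) = ε * ε ^ ((1/2):ℝ) := by
      rw [one_div, Real.inv_rpow hd0.le, show ((-(3/2)) * β : ℝ) = -((3/2) * β) by ring,
        Real.rpow_neg hd0.le, inv_inv, show ((3/2) * β : ℝ) = β * (1 + 1/2) by ring,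
        Real.rpow_mul hd0.le, Real.rpow_add (Real.rpow_pos_of_pos hd0 β), Real.rpow_one,
        ← hεdef]
    have hεr : 0 ≤ ε ^ ((1/2):ℝ) := (Real.rpow_pos_of_pos hεpos _).le
    rw [h1]
    have hc0 : (0:ℝ) ≤ (2:ℝ) ^ ((3/4):ℝ) := (Real.rpow_pos_of_pos two_pos _).le
    calc (2:ℝ) ^ ((-(3/4)) * (L:ℝ)) ≤ (ε * ε ^ ((1/2):ℝ)) * (2:ℝ) ^ ((3/4):ℝ) := by
          rw [← h5, ← h4]; exact h3
      _ ≤ (ε * (1/25)) * (2:ℝ) ^ ((3/4):ℝ) := by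
          apply mul_le_mul_of_nonneg_right _ hc0
          exact mul_le_mul_of_nonneg_left hεhalf hεpos.le
      _ ≤ (ε * (1/25)) * 1.7 := by
          apply mul_le_mul_of_nonneg_left h234 (by positivity)
      _ = 1.7 * (ε * (1/25)) := by ring
  -- θ₁ = 2^(-(1+ε))
  set θ₁ : ℝ := (2:ℝ) ^ ((-(1+ε)) : ℝ) with hθ₁def
  have hθ₁pos : 0 < θ₁ := Real.rpow_pos_of_pos two_pos _
  have hθ₁le : θ₁ * (2 + 2*(ε*Real.log 2)) ≤ 1 := by
    have h1 : (2:ℝ)^((1+ε):ℝ) = 2 * (2:ℝ)^(ε:ℝ) := by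
      rw [Real.rpow_add two_pos, Real.rpow_one]
    have h2 : 1 + ε * Real.log 2 ≤ (2:ℝ)^(ε:ℝ) := by
      rw [Real.rpow_def_of_pos two_pos]
      have := Real.add_one_le_exp (Real.log 2 * ε)
      nlinarith
    have h3 : θ₁ = ((2:ℝ)^((1+ε):ℝ))⁻¹ := by
      rw [hθ₁def, Real.rpow_neg two_pos.le]
    rw [h3, inv_mul_le_iff₀ (by positivity), mul_one, h1]
    nlinarith
  have hθ₁quarter : 1/4 ≤ θ₁ := by
    have h1 : ((1:ℝ)/4) = (2:ℝ) ^ ((-2):ℝ) := by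
      rw [show ((-2):ℝ) = ((-2:ℤ):ℝ) by norm_num, Real.rpow_intCast]
      norm_num
    rw [h1, hθ₁def]
    exact Real.rpow_le_rpow_of_exponent_le one_le_two (by linarith)
  have hθ₁half : θ₁ ≤ 1/2 := by
    have h1 : ((1:ℝ)/2) = (2:ℝ) ^ ((-1):ℝ) := by
      rw [Real.rpow_neg_one]; norm_num
    rw [h1, hθ₁def]
    exact Real.rpow_le_rpow_of_exponent_le one_le_two (by linarith)
  have hθ₁lt1 : θ₁ < 1 := by linarith
  -- the two-piece distribution q2
  set q2 : ℕ+ → ℝ := fun l =>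
    if (l:ℕ) < L then (2:ℝ)^((-(1+ε)) * ((l:ℕ):ℝ)) else (2:ℝ)^((-(3/4+ε)) * ((l:ℕ):ℝ))
    with hq2def
  have hq20 : ∀ l, 0 < q2 l := by
    intro l
    simp only [hq2def]
    split <;> exact Real.rpow_pos_of_pos two_pos _
  have hpow1 : ∀ l : ℕ+, (2:ℝ)^((-(1+ε)) * ((l:ℕ):ℝ)) = θ₁ ^ (l:ℕ) := by
    intro l
    rw [hθ₁def, ← Real.rpow_natCast ((2:ℝ)^((-(1+ε)):ℝ)) (l:ℕ), ← Real.rpow_mul two_pos.le]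
  have hpow3 : ∀ l : ℕ+, (2:ℝ)^((-(3/4:ℝ)) * ((l:ℕ):ℝ)) = θ₃ ^ (l:ℕ) := by
    intro l
    rw [hθ₃def, ← Real.rpow_natCast ((2:ℝ)^((-(3/4)):ℝ)) (l:ℕ), ← Real.rpow_mul two_pos.le]
  have hq2le : ∀ l : ℕ+, q2 l ≤ θ₁^(l:ℕ) + (if L ≤ (l:ℕ) then θ₃^(l:ℕ) else 0) := by
    intro l
    simp only [hq2def]
    by_cases h : (l:ℕ) < L
    · rw [if_pos h, if_neg (show ¬ (L ≤ (l:ℕ)) by omega), hpow1 l, add_zero]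
    · rw [if_neg h, if_pos (show L ≤ (l:ℕ) by omega)]
      have h1 : (2:ℝ)^((-(3/4+ε)) * ((l:ℕ):ℝ)) ≤ (2:ℝ)^((-(3/4:ℝ)) * ((l:ℕ):ℝ)) := by
        apply Real.rpow_le_rpow_of_exponent_le one_le_two
        nlinarith [mul_nonneg hεpos.le (by positivity : (0:ℝ) ≤ ((l:ℕ):ℝ))]
      rw [hpow3 l] at h1
      have h2 : (0:ℝ) ≤ θ₁^(l:ℕ) := by positivity
      linarith
  have hBs : Summable (fun l : ℕ+ => θ₁^(l:ℕ) + (if L ≤ (l:ℕ) then θ₃^(l:ℕ) else 0)) :=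
    (summable_pnat_geom θ₁ hθ₁pos.le hθ₁lt1).add (summable_pnat_tail θ₃ hθ₃pos.le hθ₃lt1 L)
  have hq2s : Summable q2 := by
    apply Summable.of_nonneg_of_le (fun l => (hq20 l).le) hq2le hBs
  have hq2sum : (∑' (l:ℕ+), q2 l) ≤ 1 := by
    have hstep : (∑' (l:ℕ+), q2 l)
        ≤ θ₁ * (1-θ₁)⁻¹ + θ₃^L * (1-θ₃)⁻¹ := by
      calc (∑' (l:ℕ+), q2 l)
          ≤ ∑' (l:ℕ+), (θ₁^(l:ℕ) + (if L ≤ (l:ℕ) then θ₃^(l:ℕ) else 0)) :=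
            Summable.tsum_le_tsum hq2le hq2s hBs
        _ = θ₁ * (1-θ₁)⁻¹ + θ₃^L * (1-θ₃)⁻¹ := by
            rw [Summable.tsum_add (summable_pnat_geom θ₁ hθ₁pos.le hθ₁lt1)
              (summable_pnat_tail θ₃ hθ₃pos.le hθ₃lt1 L),
              tsum_pnat_geom θ₁ hθ₁pos.le hθ₁lt1,
              tsum_pnat_geom_tail θ₃ hθ₃pos.le hθ₃lt1 L hL1]
    have hτ : θ₃^L * (1-θ₃)⁻¹ ≤ 0.17 * ε := by
      have hinv : (1-θ₃)⁻¹ ≤ 2.47 := by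
        have h1 : (1-θ₃)⁻¹ ≤ (0.405:ℝ)⁻¹ :=
          inv_anti₀ (show (0:ℝ) < 0.405 by norm_num)
            (show (0.405:ℝ) ≤ 1 - θ₃ by linarith)
        have h2 : (0.405:ℝ)⁻¹ ≤ 2.47 := by norm_num
        linarith
      have hθ₃Lpos : (0:ℝ) ≤ θ₃^L := by positivity
      have hinv0 : (0:ℝ) ≤ (1-θ₃)⁻¹ := inv_nonneg.mpr (by linarith)
      calc θ₃^L * (1-θ₃)⁻¹ ≤ (1.7 * (ε * (1/25))) * 2.47 :=
            mul_le_mul hθ₃L hinv (inv_nonneg.mpr (by linarith)) (by positivity)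
        _ ≤ 0.17 * ε := by linarith
    have hhead : θ₁ * (1-θ₁)⁻¹ ≤ 1 - 0.17 * ε := by
      have h1θ : (0:ℝ) < 1 - θ₁ := by linarith
      rw [mul_inv_le_iff₀ h1θ]
      nlinarith [mul_le_mul_of_nonneg_left hθ₁quarter (mul_nonneg hεpos.le hl2.le),
        mul_le_mul_of_nonneg_left hl2'.le hεpos.le, mul_nonneg hεpos.le hθ₁pos.le]
    linarith
  -- the good function g2
  set g2 : ℕ+ → ℝ := fun l =>
    (1+ε) * ((l:ℕ):ℝ) - (1/4) * (if L ≤ (l:ℕ) then ((l:ℕ):ℝ) else 0) with hg2def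
  have hlogq2 : ∀ l : ℕ+, Real.logb 2 (1 / q2 l) = g2 l := by
    intro l
    simp only [hq2def, hg2def]
    by_cases h : (l:ℕ) < L
    · rw [if_pos h, if_neg (show ¬ (L ≤ (l:ℕ)) by omega), one_div,
        ← Real.rpow_neg two_pos.le, Real.logb_rpow two_pos (by norm_num)]
      ring
    · rw [if_neg h, if_pos (show L ≤ (l:ℕ) by omega), one_div,
        ← Real.rpow_neg two_pos.le, Real.logb_rpow two_pos (by norm_num)]
      ring
  have hIs : Summable (fun l : ℕ+ => (if L ≤ (l:ℕ) then ((l:ℕ):ℝ) * p l else 0)) := by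
    apply Summable.of_nonneg_of_le _ _ hμs
    · intro l
      split
      · exact mul_nonneg (by positivity) (hp0 l)
      · exact le_refl 0
    · intro l
      split
      · exact le_refl _
      · exact mul_nonneg (by positivity) (hp0 l)
  have hpg2 : ∀ l : ℕ+, p l * g2 l
      = (1+ε) * (((l:ℕ):ℝ) * p l) - (1/4) * (if L ≤ (l:ℕ) then ((l:ℕ):ℝ) * p l else 0) := by
    intro l
    simp only [hg2def]
    by_cases h : L ≤ (l:ℕ)
    · rw [if_pos h, if_pos h]; ring
    · rw [if_neg h, if_neg h]; ring
  have hpg2s : Summable (fun l : ℕ+ => p l * g2 l) := by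
    have heq : (fun l : ℕ+ => p l * g2 l) = fun l : ℕ+ =>
        (1+ε) * (((l:ℕ):ℝ) * p l) - (1/4) * (if L ≤ (l:ℕ) then ((l:ℕ):ℝ) * p l else 0) := by
      funext l; exact hpg2 l
    rw [heq]
    exact (hμs.mul_left _).sub (hIs.mul_left _)
  have hg : ∀ l : ℕ+, p l * Real.logb 2 (1 / q2 l) ≤ p l * g2 l := by
    intro l; rw [hlogq2 l]
  have hgibbs2 := gibbs p q2 g2 hp0 hp1 hq20 hg hq2s hq2sum hps hpsum hpg2s
  have htsum2 : (∑' (l:ℕ+), p l * g2 l)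
      = (1+ε) * μ - (1/4) * (∑' (l:ℕ+), (if L ≤ (l:ℕ) then ((l:ℕ):ℝ) * p l else 0)) := by
    have heq : (fun l : ℕ+ => p l * g2 l) = fun l : ℕ+ =>
        (1+ε) * (((l:ℕ):ℝ) * p l) - (1/4) * (if L ≤ (l:ℕ) then ((l:ℕ):ℝ) * p l else 0) := by
      funext l; exact hpg2 l
    rw [heq, Summable.tsum_sub (hμs.mul_left _) (hIs.mul_left _), tsum_mul_left, tsum_mul_left, ← hμdef]
  rw [htsum2] at hgibbs2
  have hfin : (1 - ε) * μ ≤ (1+ε) * μ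
      - (1/4) * (∑' (l:ℕ+), (if L ≤ (l:ℕ) then ((l:ℕ):ℝ) * p l else 0)) :=
    le_trans hH hgibbs2
  have hT0 : (0:ℝ) ≤ ∑' (l:ℕ+), (if L ≤ (l:ℕ) then ((l:ℕ):ℝ) * p l else 0) := by
    apply tsum_nonneg
    intro l
    split
    · exact mul_nonneg (by positivity) (hp0 l)
    · exact le_refl 0
  nlinarith [mul_le_mul_of_nonneg_left hμ23 hεpos.le]
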